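/- Let Σ be a finite alphabet, A ⊆ Σ × Σ, n an even positive integer, and let w_s and w_t be words of length n. Let G = G(Σ, A, n) and k = n + 1 + 3(m(n−1) + n) with m = |Σ × Σ ∖ A|. If (W = (Σ, A), w_s, w_t) is a yes-instance of Even/Odd Word Reconfiguration, then I_{w_s} and I_{w_t} belong to the same connected component of the token-sliding reconfiguration graph S_k(G), i.e., there is a sequence of single-token slides transforming I_{w_s} into I_{w_t} through independent sets of size k. -/

import Mathlib

open scoped Classical
noncomputable section

/-- The internal edges of a cage, between the vertices `f_1, …, f_8`
(0-indexed): the three internally vertex-disjoint paths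
`f_1–f_2–f_3–f_4`, `f_1–f_5–f_6–f_4` and `f_1–f_7–f_8–f_4`. -/
def cageFF : List (Fin 8 × Fin 8) :=
  [(0, 1), (1, 2), (2, 3), (0, 4), (4, 5), (5, 3), (0, 6), (6, 7), (7, 3)]

/-- The cage vertices adjacent to `h₁`: `f_1, f_3, f_6, f_8` (0-indexed). -/
def cageH1 : List (Fin 8) := [0, 2, 5, 7]

/-- The cage vertices adjacent to `h₂`: `f_2, f_4, f_5, f_7` (0-indexed). -/
def cageH2 : List (Fin 8) := [1, 3, 4, 6]

/-- Adding a cage between `h₁ c` and `h₂ c` for every `c : ι`. -/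
def addCages {V ι : Type*} (B : SimpleGraph V) (h₁ h₂ : ι → V) :
    SimpleGraph (V ⊕ ι × Fin 8) :=
  SimpleGraph.fromRel (fun a b =>
    match a, b with
    | Sum.inl u, Sum.inl v => B.Adj u v
    | Sum.inl u, Sum.inr (c, j) => (u = h₁ c ∧ j ∈ cageH1) ∨ (u = h₂ c ∧ j ∈ cageH2)
    | Sum.inr _, Sum.inl _ => False
    | Sum.inr (c, j), Sum.inr (c', j') => c = c' ∧ (j, j') ∈ cageFF)

/-- The base vertices of the construction `G(Σ, A, n)`:
`Sum.inl (i, σ)` is the vertex `x^{i+1}_σ` (positions are `1`-based in the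
paper, so `i : Fin n` encodes position `i + 1`); `Sum.inr (Sum.inl i)` is the
vertex `o^{i+1}` (if `i + 1` is odd) resp. `e^{i+1}` (if `i + 1` is even); and
`Sum.inr (Sum.inr 0)`, `Sum.inr (Sum.inr 1)` are the vertices `z_1`, `z_2`. -/
abbrev BaseV (Sig : Type) (n : ℕ) : Type := (Fin n × Sig) ⊕ (Fin n ⊕ Fin 2)

/-- The index type for the cages of the construction: `Sum.inl` indexes the
cage between `x^i_j` and `x^{i+1}_{j'}` for `(σ_j, σ_{j'}) ∉ A`; `Sum.inr i`
indexes the cage between `z_1` and `o^{i+1}` (for `i + 1` odd), resp. between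
`z_2` and `e^{i+1}` (for `i + 1` even). -/
abbrev CageIdx (Sig : Type) [DecidableEq Sig] (A : Finset (Sig × Sig)) (n : ℕ) : Type :=
  {q : (Fin n × Fin n) × Sig × Sig //
      (q.1.2 : ℕ) = (q.1.1 : ℕ) + 1 ∧ (q.2.1, q.2.2) ∉ A} ⊕ Fin n

/-- The base graph: `o^i` (resp. `e^i`) is adjacent to every vertex of `X_i`,
and `z_1` is adjacent to `z_2`. -/
def baseGraph (Sig : Type) (n : ℕ) : SimpleGraph (BaseV Sig n) :=
  SimpleGraph.fromRel (fun a b =>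
    match a, b with
    | Sum.inl (i, _), Sum.inr (Sum.inl i') => i = i'
    | Sum.inr (Sum.inr a), Sum.inr (Sum.inr b) => a ≠ b
    | _, _ => False)

variable (Sig : Type) [Fintype Sig] [DecidableEq Sig] (A : Finset (Sig × Sig)) (n : ℕ)

/-- The first endpoint (`h_1`) of each cage. -/
def cageH1v : CageIdx Sig A n → BaseV Sig n
  | Sum.inl q => Sum.inl (q.1.1.1, q.1.2.1)
  | Sum.inr i => Sum.inr (Sum.inr (if Odd ((i : ℕ) + 1) then 0 else 1))

/-- The second endpoint (`h_2`) of each cage. -/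
def cageH2v : CageIdx Sig A n → BaseV Sig n
  | Sum.inl q => Sum.inl (q.1.1.2, q.1.2.2)
  | Sum.inr i => Sum.inr (Sum.inl i)

/-- The full vertex set of the construction `G(Σ, A, n)`. -/
abbrev FullV : Type := BaseV Sig n ⊕ CageIdx Sig A n × Fin 8

/-- The graph `G(Σ, A, n)` of the token-sliding construction. -/
def tsGraph : SimpleGraph (FullV Sig A n) :=
  addCages (baseGraph Sig n) (cageH1v Sig A n) (cageH2v Sig A n)

/-- `m = |Σ × Σ ∖ A|`. -/
def tsM : ℕ := ((Finset.univ : Finset (Sig × Sig)) \ A).card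

/-- The token count `k = n + 1 + 3(m(n−1) + n)`. -/
def tsK : ℕ := n + 1 + 3 * (tsM Sig A * (n - 1) + n)

/-- `I` is an independent set of `G`. -/
def IsIndep {α : Type*} (G : SimpleGraph α) (I : Finset α) : Prop :=
  ∀ u ∈ I, ∀ v ∈ I, ¬ G.Adj u v

/-- An independent set `I` of `G(Σ, A, n)` of size exactly `k` is
well-formed if: exactly one of its tokens (the switch token) is on `z_1` or
`z_2`; for each `i`, exactly one token (the `Σ_i`-token) is on a vertex of
`X_i ∪ {o^i}` (for `i` odd) resp. `X_i ∪ {e^i}` (for `i` even); and each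
extended cage (including its two endpoints) carries exactly three tokens. -/
def WellFormed (I : Finset (FullV Sig A n)) : Prop :=
  IsIndep (tsGraph Sig A n) I ∧
  I.card = tsK Sig A n ∧
  (I.filter (fun w => w = Sum.inl (Sum.inr (Sum.inr 0)) ∨
      w = Sum.inl (Sum.inr (Sum.inr 1)))).card = 1 ∧
  (∀ i : Fin n,
    (I.filter (fun w => (∃ σ : Sig, w = Sum.inl (Sum.inl (i, σ))) ∨
        w = Sum.inl (Sum.inr (Sum.inl i)))).card = 1) ∧
  (∀ c : CageIdx Sig A n,
    (I.filter (fun w => w = Sum.inl (cageH1v Sig A n c) ∨ w = Sum.inl (cageH2v Sig A n c) ∨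
        ∃ j : Fin 8, w = Sum.inr (c, j))).card = 3)

/-- `I` is strictly well-formed: well-formed, with every `Σ_i`-token on a
vertex of `X_i` (not on `o^i` or `e^i`). -/
def StrictWellFormed (I : Finset (FullV Sig A n)) : Prop :=
  WellFormed Sig A n I ∧ ∀ i : Fin n, Sum.inl (Sum.inr (Sum.inl i)) ∉ I

/-- `w : Fin n → Σ` is a word: every two consecutive symbols are in `A`. -/
def IsWord (w : Fin n → Sig) : Prop :=
  ∀ i i' : Fin n, (i' : ℕ) = (i : ℕ) + 1 → (w i, w i') ∈ A

/-- Two strings differ only at even positions or only at odd positions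
(positions are `1`-based: `i : Fin n` is position `i + 1`). -/
def EOStep (w w' : Fin n → Sig) : Prop :=
  (∀ i : Fin n, Odd ((i : ℕ) + 1) → w i = w' i) ∨
  (∀ i : Fin n, Even ((i : ℕ) + 1) → w i = w' i)

/-- `(W = (Σ, A), ws, wt)` is a yes-instance of Even/Odd Word Reconfiguration:
there is a sequence of words from `ws` to `wt` in which consecutive words
differ only at even positions or only at odd positions. -/
def EOReach (ws wt : Fin n → Sig) : Prop :=
  ∃ (ℓ : ℕ) (w : ℕ → Fin n → Sig), w 0 = ws ∧ w ℓ = wt ∧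
    (∀ i ≤ ℓ, IsWord Sig A n (w i)) ∧ ∀ i < ℓ, EOStep Sig n (w i) (w (i + 1))

/-- Whether the second endpoint (`h_2`) of a cage carries a token of `I_w`. -/
def cageOcc (w : Fin n → Sig) : CageIdx Sig A n → Prop
  | Sum.inl q => w q.1.1.2 = q.1.2.2
  | Sum.inr _ => False

/-- The strictly well-formed independent set `I_w` associated with a word `w`:
it contains `z_1`, the vertex `x^i_{w i}` for each position `i`, and, in each
`(u,v)`-cage, the vertices `f_2, f_5, f_7` if there is no token on `v` and
`f_3, f_6, f_8` otherwise. -/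
def Iword (w : Fin n → Sig) : Finset (FullV Sig A n) :=
  Finset.univ.filter (fun a =>
    match a with
    | Sum.inl (Sum.inl (i, σ)) => w i = σ
    | Sum.inl (Sum.inr (Sum.inl _)) => False
    | Sum.inl (Sum.inr (Sum.inr j)) => j = 0
    | Sum.inr (c, j) =>
        if cageOcc Sig A n w c then j = 2 ∨ j = 5 ∨ j = 7 else j = 1 ∨ j = 4 ∨ j = 6)

/-- `I` and `J` lie in the same connected component of the token-sliding
reconfiguration graph `S_k(G)`: there is a sequence of single-token slides
transforming `I` into `J` through independent sets of size exactly `k`. -/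
def TSReach {α : Type*} [DecidableEq α] (G : SimpleGraph α) (k : ℕ) (I J : Finset α) : Prop :=
  ∃ (t : ℕ) (Q : ℕ → Finset α), Q 0 = I ∧ Q t = J ∧
    (∀ i ≤ t, IsIndep G (Q i) ∧ (Q i).card = k) ∧
    (∀ i < t, ∃ u v, Q (i + 1) \ Q i = {u} ∧ Q i \ Q (i + 1) = {v} ∧ G.Adj u v)

/-! ### Auxiliary development for Statement 18 -/

section Aux

variable {Sig : Type} [Fintype Sig] [DecidableEq Sig] {A : Finset (Sig × Sig)} {n : ℕ}

/-- Position of the `p`-th cage token: near (`false`: `f_2,f_5,f_7`) or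
far (`true`: `f_3,f_6,f_8`). -/
def fidx : Fin 3 → Bool → Fin 8
  | 0, false => 1 | 0, true => 2
  | 1, false => 4 | 1, true => 5
  | 2, false => 6 | 2, true => 7

lemma fidx_inj : ∀ (p p' : Fin 3) (b b' : Bool), fidx p b = fidx p' b' → p = p' ∧ b = b' := by
  decide

lemma fidx_cageH1 : ∀ (p : Fin 3) (b : Bool), fidx p b ∈ cageH1 → b = true := by decide

lemma fidx_cageH2 : ∀ (p : Fin 3) (b : Bool), fidx p b ∈ cageH2 → b = false := by decide

lemma fidx_cageFF : ∀ (p p' : Fin 3) (b b' : Bool),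
    (fidx p b, fidx p' b') ∈ cageFF → p = p' ∧ b ≠ b' := by decide

/-- The token configuration set. -/
def cfgSet (z : Fin 2) (sp : Fin n → Option Sig) (cs : CageIdx Sig A n → Fin 3 → Bool) :
    Finset (FullV Sig A n) :=
  Finset.univ.filter fun a =>
    match a with
    | Sum.inl (Sum.inl (i, σ)) => sp i = some σ
    | Sum.inl (Sum.inr (Sum.inl i)) => sp i = none
    | Sum.inl (Sum.inr (Sum.inr j)) => z = j
    | Sum.inr (c, j) => ∃ p, fidx p (cs c p) = j

variable {z : Fin 2} {sp : Fin n → Option Sig} {cs : CageIdx Sig A n → Fin 3 → Bool}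

@[simp] lemma mem_cfgSet_x {i : Fin n} {σ : Sig} :
    (Sum.inl (Sum.inl (i, σ)) : FullV Sig A n) ∈ cfgSet z sp cs ↔ sp i = some σ := by
  simp [cfgSet]

@[simp] lemma mem_cfgSet_o {i : Fin n} :
    (Sum.inl (Sum.inr (Sum.inl i)) : FullV Sig A n) ∈ cfgSet z sp cs ↔ sp i = none := by
  simp [cfgSet]

@[simp] lemma mem_cfgSet_z {j : Fin 2} :
    (Sum.inl (Sum.inr (Sum.inr j)) : FullV Sig A n) ∈ cfgSet z sp cs ↔ z = j := by
  simp [cfgSet]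

@[simp] lemma mem_cfgSet_c {c : CageIdx Sig A n} {j : Fin 8} :
    (Sum.inr (c, j) : FullV Sig A n) ∈ cfgSet z sp cs ↔ ∃ p, fidx p (cs c p) = j := by
  simp [cfgSet]

end Aux

section Aux2
variable {Sig : Type} [Fintype Sig] [DecidableEq Sig] {A : Finset (Sig × Sig)} {n : ℕ}
variable {z : Fin 2} {sp : Fin n → Option Sig} {cs : CageIdx Sig A n → Fin 3 → Bool}

/-- A base vertex is free (carries no token). -/
def Free (z : Fin 2) (sp : Fin n → Option Sig) : BaseV Sig n → Prop
  | Sum.inl (i, σ) => sp i ≠ some σ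
  | Sum.inr (Sum.inl i) => sp i ≠ none
  | Sum.inr (Sum.inr j) => z ≠ j

lemma not_mem_of_free {v : BaseV Sig n} (h : Free z sp v) :
    (Sum.inl v : FullV Sig A n) ∉ cfgSet z sp cs := by
  rcases v with ⟨i, σ⟩ | (i | j)
  · simpa [Free] using h
  · simpa [Free] using h
  · simpa [Free] using h

def Valid (z : Fin 2) (sp : Fin n → Option Sig) (cs : CageIdx Sig A n → Fin 3 → Bool) : Prop :=
  ∀ c : CageIdx Sig A n,
    ((∃ p, cs c p = true) → Free z sp (cageH1v Sig A n c)) ∧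
    ((∃ p, cs c p = false) → Free z sp (cageH2v Sig A n c))

lemma keyB {u' v' : BaseV Sig n} (hu : (Sum.inl u' : FullV Sig A n) ∈ cfgSet z sp cs)
    (hv : (Sum.inl v' : FullV Sig A n) ∈ cfgSet z sp cs)
    (h : (baseGraph Sig n).Adj u' v') : False := by
  rw [baseGraph, SimpleGraph.fromRel_adj] at h
  obtain ⟨hne, h | h⟩ := h
  · rcases u' with ⟨i, σ⟩ | i | a <;> rcases v' with ⟨i', σ'⟩ | i' | b
    all_goals try exact h
    · obtain rfl : i = i' := h
      simp only [mem_cfgSet_x] at hu; simp only [mem_cfgSet_o] at hv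
      rw [hv] at hu; exact nomatch hu
    · simp only [mem_cfgSet_z] at hu hv
      exact h (hu ▸ hv)
  · rcases u' with ⟨i, σ⟩ | i | a <;> rcases v' with ⟨i', σ'⟩ | i' | b
    all_goals try exact h
    · obtain rfl : i' = i := h
      simp only [mem_cfgSet_x] at hv; simp only [mem_cfgSet_o] at hu
      rw [hu] at hv; exact nomatch hv
    · simp only [mem_cfgSet_z] at hu hv
      exact h (hv ▸ hu)

lemma keyC (hV : Valid z sp cs) {u' : BaseV Sig n} {c : CageIdx Sig A n} {j : Fin 8}
    (hu : (Sum.inl u' : FullV Sig A n) ∈ cfgSet z sp cs)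
    (hv : (Sum.inr (c, j) : FullV Sig A n) ∈ cfgSet z sp cs)
    (h : (u' = cageH1v Sig A n c ∧ j ∈ cageH1) ∨ (u' = cageH2v Sig A n c ∧ j ∈ cageH2)) :
    False := by
  simp only [mem_cfgSet_c] at hv
  obtain ⟨p, hp⟩ := hv
  rcases h with ⟨rfl, hj⟩ | ⟨rfl, hj⟩
  · have hb : cs c p = true := fidx_cageH1 p _ (hp ▸ hj)
    exact not_mem_of_free ((hV c).1 ⟨p, hb⟩) hu
  · have hb : cs c p = false := fidx_cageH2 p _ (hp ▸ hj)
    exact not_mem_of_free ((hV c).2 ⟨p, hb⟩) hu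

lemma keyD {c c' : CageIdx Sig A n} {j j' : Fin 8}
    (hu : (Sum.inr (c, j) : FullV Sig A n) ∈ cfgSet z sp cs)
    (hv : (Sum.inr (c', j') : FullV Sig A n) ∈ cfgSet z sp cs)
    (h : c = c' ∧ (j, j') ∈ cageFF) : False := by
  obtain ⟨rfl, hff⟩ := h
  simp only [mem_cfgSet_c] at hu hv
  obtain ⟨p, hp⟩ := hu; obtain ⟨p', hp'⟩ := hv
  obtain ⟨rfl, hbb⟩ := fidx_cageFF p p' _ _ (by rw [hp, hp']; exact hff)
  exact hbb rfl

lemma cfg_indep (hV : Valid z sp cs) : IsIndep (tsGraph Sig A n) (cfgSet z sp cs) := by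
  intro u hu v hv hadj
  rw [tsGraph, addCages, SimpleGraph.fromRel_adj] at hadj
  obtain ⟨hne, hr | hr⟩ := hadj
  · rcases u with u' | ⟨c, j⟩ <;> rcases v with v' | ⟨c', j'⟩
    · exact keyB hu hv hr
    · exact keyC hV hu hv hr
    · exact hr
    · exact keyD hu hv hr
  · rcases u with u' | ⟨c, j⟩ <;> rcases v with v' | ⟨c', j'⟩
    · exact keyB hv hu hr
    · exact hr
    · exact keyC hV hv hu hr
    · exact keyD hv hu hr

end Aux2
section Aux3
variable {Sig : Type} [Fintype Sig] [DecidableEq Sig] {A : Finset (Sig × Sig)} {n : ℕ}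
variable {z : Fin 2} {sp : Fin n → Option Sig} {cs : CageIdx Sig A n → Fin 3 → Bool}

def tokenMap (z : Fin 2) (sp : Fin n → Option Sig) (cs : CageIdx Sig A n → Fin 3 → Bool) :
    Unit ⊕ Fin n ⊕ CageIdx Sig A n × Fin 3 → FullV Sig A n
  | Sum.inl _ => Sum.inl (Sum.inr (Sum.inr z))
  | Sum.inr (Sum.inl i) =>
      match sp i with
      | some σ => Sum.inl (Sum.inl (i, σ))
      | none => Sum.inl (Sum.inr (Sum.inl i))
  | Sum.inr (Sum.inr (c, p)) => Sum.inr (c, fidx p (cs c p))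

lemma tokenMap_inj : Function.Injective (tokenMap z sp cs (A := A)) := by
  intro a b hab
  rcases a with _ | (i | ⟨c, p⟩) <;> rcases b with _ | (i' | ⟨c', p'⟩)
  · rfl
  · rcases hsi : sp i' with _ | σ <;> simp [tokenMap, hsi] at hab
  · simp [tokenMap] at hab
  · rcases hsi : sp i with _ | σ <;> simp [tokenMap, hsi] at hab
  · have hii : i = i' := by
      rcases hsi : sp i with _ | σ <;> rcases hsi' : sp i' with _ | σ' <;>
        simp [tokenMap, hsi, hsi'] at hab <;> first | exact hab | exact hab.1
    rw [hii]
  · rcases hsi : sp i with _ | σ <;> simp [tokenMap, hsi] at hab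
  · simp [tokenMap] at hab
  · rcases hsi : sp i' with _ | σ <;> simp [tokenMap, hsi] at hab
  · simp only [tokenMap, Sum.inr.injEq, Prod.mk.injEq] at hab
    obtain ⟨rfl, h2⟩ := hab
    obtain ⟨rfl, -⟩ := fidx_inj _ _ _ _ h2
    rfl

lemma image_tokenMap : Finset.image (tokenMap z sp cs (A := A)) Finset.univ = cfgSet z sp cs := by
  ext a
  simp only [Finset.mem_image, Finset.mem_univ, true_and]
  constructor
  · rintro ⟨t, rfl⟩
    rcases t with _ | (i | ⟨c, p⟩)
    · simp [tokenMap]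
    · rcases hsi : sp i with _ | σ <;> simp [tokenMap, hsi]
    · simp only [tokenMap, mem_cfgSet_c]
      exact ⟨p, rfl⟩
  · intro ha
    rcases a with (⟨i, σ⟩ | (i | j)) | ⟨c, j⟩
    · exact ⟨Sum.inr (Sum.inl i), by simp only [mem_cfgSet_x] at ha; simp [tokenMap, ha]⟩
    · exact ⟨Sum.inr (Sum.inl i), by simp only [mem_cfgSet_o] at ha; simp [tokenMap, ha]⟩
    · refine ⟨Sum.inl (), ?_⟩
      simp only [mem_cfgSet_z] at ha
      simp [tokenMap, ha]
    · simp only [mem_cfgSet_c] at ha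
      obtain ⟨p, hp⟩ := ha
      exact ⟨Sum.inr (Sum.inr (c, p)), by simp [tokenMap, hp]⟩

lemma card_cageIdx : Fintype.card (CageIdx Sig A n) = tsM Sig A * (n - 1) + n := by
  rw [Fintype.card_sum, Fintype.card_fin]
  congr 1
  have e1 : {q : (Fin n × Fin n) × Sig × Sig //
      (q.1.2 : ℕ) = (q.1.1 : ℕ) + 1 ∧ (q.2.1, q.2.2) ∉ A} ≃
      {p : Fin n × Fin n // (p.2 : ℕ) = (p.1 : ℕ) + 1} × {s : Sig × Sig // (s.1, s.2) ∉ A} :=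
    Equiv.subtypeProdEquivProd (p := fun p : Fin n × Fin n => (p.2 : ℕ) = (p.1 : ℕ) + 1)
      (q := fun s : Sig × Sig => (s.1, s.2) ∉ A)
  have e2 : {p : Fin n × Fin n // (p.2 : ℕ) = (p.1 : ℕ) + 1} ≃ Fin (n - 1) :=
    { toFun := fun q => ⟨q.1.1, by have := q.1.2.isLt; have := q.2; omega⟩
      invFun := fun i => ⟨(⟨i, by have := i.isLt; omega⟩, ⟨(i : ℕ) + 1, by have := i.isLt; omega⟩),
        rfl⟩
      left_inv := fun q => Subtype.ext (Prod.ext (Fin.ext rfl) (Fin.ext q.2.symm))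
      right_inv := fun i => rfl }
  rw [Fintype.card_congr (e1.trans (e2.prodCongr (Equiv.refl _))), Fintype.card_prod,
    Fintype.card_fin, mul_comm]
  congr 1
  have : ∀ s : Sig × Sig, ((s.1, s.2) ∉ A) = (s ∉ A) := fun s => rfl
  rw [Fintype.card_subtype, tsM]
  congr 1
  ext s
  simp [Finset.mem_sdiff]

lemma cfg_card : (cfgSet z sp cs (A := A)).card = tsK Sig A n := by
  rw [← image_tokenMap, Finset.card_image_of_injective _ tokenMap_inj, Finset.card_univ]
  rw [Fintype.card_sum, Fintype.card_sum, Fintype.card_prod, Fintype.card_fin,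
    Fintype.card_fin, Fintype.card_unit, card_cageIdx, tsK]
  ring

end Aux3
section Aux4
set_option linter.unusedSectionVars false
variable {α : Type*} [DecidableEq α] {G : SimpleGraph α} {k : ℕ}

lemma tsreach_refl {I : Finset α} (h : IsIndep G I) (hc : I.card = k) : TSReach G k I I :=
  ⟨0, fun _ => I, rfl, rfl, fun _ _ => ⟨h, hc⟩, fun i hi => absurd hi (Nat.not_lt_zero i)⟩

lemma tsreach_trans {I J L : Finset α} (h1 : TSReach G k I J) (h2 : TSReach G k J L) :
    TSReach G k I L := by
  obtain ⟨t1, Q1, h10, h1t, h1inv, h1s⟩ := h1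
  obtain ⟨t2, Q2, h20, h2t, h2inv, h2s⟩ := h2
  have hJ : Q1 t1 = Q2 0 := by rw [h1t, h20]
  refine ⟨t1 + t2, fun i => if i ≤ t1 then Q1 i else Q2 (i - t1),
    by simp [h10], ?_, ?_, ?_⟩
  · dsimp only
    rcases Nat.eq_zero_or_pos t2 with ht2 | ht2
    · subst ht2
      simp only [Nat.add_zero, if_pos (le_refl t1)]
      rw [h1t, ← h20]; exact h2t
    · rw [if_neg (by omega), show t1 + t2 - t1 = t2 from by omega]; exact h2t
  · intro i hi
    dsimp only
    by_cases h : i ≤ t1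
    · rw [if_pos h]; exact h1inv i h
    · rw [if_neg h]; exact h2inv (i - t1) (by omega)
  · intro i hi
    dsimp only
    by_cases hc1 : i + 1 ≤ t1
    · rw [if_pos hc1, if_pos (by omega)]; exact h1s i (by omega)
    · by_cases hc2 : i ≤ t1
      · have hit : i = t1 := by omega
        subst hit
        rw [if_neg hc1, if_pos le_rfl, show i + 1 - i = 1 from by omega, hJ]
        exact h2s 0 (by omega)
      · rw [if_neg hc1, if_neg hc2, show i + 1 - t1 = (i - t1) + 1 from by omega]
        exact h2s (i - t1) (by omega)

lemma tsreach_single {I J : Finset α} (hI : IsIndep G I) (hcI : I.card = k)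
    (hJ : IsIndep G J) (hcJ : J.card = k) {u v : α}
    (hd1 : J \ I = {u}) (hd2 : I \ J = {v}) (hadj : G.Adj u v) : TSReach G k I J := by
  refine ⟨1, fun i => if i = 0 then I else J, by simp, by simp, ?_, ?_⟩
  · intro i hi
    by_cases h : i = 0 <;> simp only [h, if_pos, if_neg, if_true, if_false, reduceIte] <;>
      exact ⟨by assumption, by assumption⟩
  · intro i hi
    have hi0 : i = 0 := by omega
    subst hi0
    exact ⟨u, v, by simpa using hd1, by simpa using hd2, hadj⟩

end Aux4
section Aux5
set_option linter.unusedSectionVars false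
variable {Sig : Type} [Fintype Sig] [DecidableEq Sig] {A : Finset (Sig × Sig)} {n : ℕ}
variable {z z' : Fin 2} {sp : Fin n → Option Sig} {cs : CageIdx Sig A n → Fin 3 → Bool}

lemma adj_zz {a b : Fin 2} (h : a ≠ b) :
    (tsGraph Sig A n).Adj (Sum.inl (Sum.inr (Sum.inr a))) (Sum.inl (Sum.inr (Sum.inr b))) := by
  rw [tsGraph, addCages, SimpleGraph.fromRel_adj]
  refine ⟨by simpa using h, Or.inl ?_⟩
  show (baseGraph Sig n).Adj (Sum.inr (Sum.inr a)) (Sum.inr (Sum.inr b))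
  rw [baseGraph, SimpleGraph.fromRel_adj]
  exact ⟨by simpa using h, Or.inl h⟩

lemma adj_xo {i : Fin n} {σ : Sig} :
    (tsGraph Sig A n).Adj (Sum.inl (Sum.inl (i, σ))) (Sum.inl (Sum.inr (Sum.inl i))) := by
  rw [tsGraph, addCages, SimpleGraph.fromRel_adj]
  refine ⟨by simp, Or.inl ?_⟩
  show (baseGraph Sig n).Adj (Sum.inl (i, σ)) (Sum.inr (Sum.inl i))
  rw [baseGraph, SimpleGraph.fromRel_adj]
  exact ⟨by simp, Or.inl rfl⟩

lemma adj_cage {c : CageIdx Sig A n} {j j' : Fin 8} (hne : j ≠ j')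
    (h : (j, j') ∈ cageFF ∨ (j', j) ∈ cageFF) :
    (tsGraph Sig A n).Adj (Sum.inr (c, j)) (Sum.inr (c, j')) := by
  rw [tsGraph, addCages, SimpleGraph.fromRel_adj]
  refine ⟨by simp [hne], ?_⟩
  rcases h with h | h
  · exact Or.inl ⟨rfl, h⟩
  · exact Or.inr ⟨rfl, h⟩

lemma fidx_flip : ∀ (p : Fin 3) (b : Bool), fidx p (!b) ≠ fidx p b ∧
    ((fidx p (!b), fidx p b) ∈ cageFF ∨ (fidx p b, fidx p (!b)) ∈ cageFF) := by decide

lemma diff_z (hzz : z ≠ z') :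
    cfgSet z' sp cs \ cfgSet z sp cs
      = {(Sum.inl (Sum.inr (Sum.inr z')) : FullV Sig A n)} := by
  ext a
  rcases a with (⟨i, σ⟩ | (i | j)) | ⟨c, j⟩ <;>
    simp only [Finset.mem_sdiff, Finset.mem_singleton, mem_cfgSet_x, mem_cfgSet_o,
      mem_cfgSet_z, mem_cfgSet_c]
  · simp
  · simp
  · constructor
    · rintro ⟨rfl, -⟩; rfl
    · intro h
      obtain rfl : j = z' := by simpa using h
      exact ⟨rfl, hzz⟩
  · simp

/-- z-slide. -/
lemma move_z (hzz : z ≠ z') (hV : Valid z sp cs) (hV' : Valid z' sp cs) :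
    TSReach (tsGraph Sig A n) (tsK Sig A n) (cfgSet z sp cs) (cfgSet z' sp cs) :=
  tsreach_single (cfg_indep hV) cfg_card (cfg_indep hV') cfg_card
    (diff_z hzz) (diff_z hzz.symm) (adj_zz hzz.symm)

lemma diff_sp {j : Fin n} {σ : Sig} (hsj : sp j = some σ) :
    cfgSet z (fun i => if i = j then none else sp i) cs \ cfgSet z sp cs
      = {(Sum.inl (Sum.inr (Sum.inl j)) : FullV Sig A n)} := by
  ext a
  rcases a with (⟨i, τ⟩ | (i | t)) | ⟨c, t⟩ <;>
    simp only [Finset.mem_sdiff, Finset.mem_singleton, mem_cfgSet_x, mem_cfgSet_o,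
      mem_cfgSet_z, mem_cfgSet_c]
  · by_cases hij : i = j <;> simp [hij]
  · by_cases hij : i = j <;> simp [hij, hsj]
  · simp
  · simp

lemma diff_sp' {j : Fin n} {σ : Sig} (hsj : sp j = some σ) :
    cfgSet z sp cs \ cfgSet z (fun i => if i = j then none else sp i) cs
      = {(Sum.inl (Sum.inl (j, σ)) : FullV Sig A n)} := by
  ext a
  rcases a with (⟨i, τ⟩ | (i | t)) | ⟨c, t⟩ <;>
    simp only [Finset.mem_sdiff, Finset.mem_singleton, mem_cfgSet_x, mem_cfgSet_o,
      mem_cfgSet_z, mem_cfgSet_c]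
  · by_cases hij : i = j
    · subst hij
      simp only [if_pos rfl, hsj]
      constructor
      · rintro ⟨h, -⟩
        obtain rfl : σ = τ := by simpa using h
        rfl
      · intro h
        obtain ⟨-, rfl⟩ : i = i ∧ τ = σ := by simpa using h
        simp
    · simp [hij]
  · by_cases hij : i = j <;> simp [hij, hsj]
  · simp
  · simp

/-- sp-slide from `x^j_σ` to `o^j`. -/
lemma move_sp {j : Fin n} {σ : Sig} (hsj : sp j = some σ)
    (hV : Valid z sp cs) (hV' : Valid z (fun i => if i = j then none else sp i) cs) :
    TSReach (tsGraph Sig A n) (tsK Sig A n) (cfgSet z sp cs)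
      (cfgSet z (fun i => if i = j then none else sp i) cs) :=
  tsreach_single (cfg_indep hV) cfg_card (cfg_indep hV') cfg_card
    (diff_sp hsj) (diff_sp' hsj) (adj_xo.symm)

/-- sp-slide from `o^j` to `x^j_σ`. -/
lemma move_sp' {j : Fin n} {σ : Sig} (hsj : sp j = some σ)
    (hV : Valid z sp cs) (hV' : Valid z (fun i => if i = j then none else sp i) cs) :
    TSReach (tsGraph Sig A n) (tsK Sig A n)
      (cfgSet z (fun i => if i = j then none else sp i) cs) (cfgSet z sp cs) :=
  tsreach_single (cfg_indep hV') cfg_card (cfg_indep hV) cfg_card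
    (diff_sp' hsj) (diff_sp hsj) adj_xo

lemma diff_cs {c0 : CageIdx Sig A n} {p0 : Fin 3} :
    cfgSet z sp (fun c p => if c = c0 ∧ p = p0 then !(cs c0 p0) else cs c p) \ cfgSet z sp cs
      = {(Sum.inr (c0, fidx p0 (!(cs c0 p0))) : FullV Sig A n)} := by
  ext a
  rcases a with (⟨i, τ⟩ | (i | t)) | ⟨c, j⟩ <;>
    simp only [Finset.mem_sdiff, Finset.mem_singleton, mem_cfgSet_x, mem_cfgSet_o,
      mem_cfgSet_z, mem_cfgSet_c]
  · simp
  · simp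
  · simp
  · by_cases hc : c = c0
    · subst hc
      simp only [Sum.inr.injEq, Prod.mk.injEq, true_and]
      constructor
      · rintro ⟨⟨p, hp⟩, hn⟩
        by_cases hp0 : p = p0
        · subst hp0
          simp only [and_self, eq_self_iff_true, if_true] at hp
          exact hp.symm
        · exfalso
          refine hn ⟨p, ?_⟩
          rw [← hp]
          congr 1
          simp [hp0]
      · rintro rfl
        refine ⟨⟨p0, by simp⟩, ?_⟩
        rintro ⟨p, hp⟩
        obtain ⟨rfl, hb⟩ := fidx_inj _ _ _ _ hp
        exact (Bool.not_ne_self _) hb.symm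
    · constructor
      · rintro ⟨⟨p, hp⟩, hn⟩
        refine absurd ⟨p, ?_⟩ hn
        rw [← hp]
        congr 1
        simp [hc]
      · intro h
        obtain ⟨hc', -⟩ : c = c0 ∧ j = fidx p0 (!(cs c0 p0)) := by simpa using h
        exact absurd hc' hc

lemma diff_cs' {c0 : CageIdx Sig A n} {p0 : Fin 3} :
    cfgSet z sp cs \ cfgSet z sp (fun c p => if c = c0 ∧ p = p0 then !(cs c0 p0) else cs c p)
      = {(Sum.inr (c0, fidx p0 (cs c0 p0)) : FullV Sig A n)} := by
  ext a
  rcases a with (⟨i, τ⟩ | (i | t)) | ⟨c, j⟩ <;>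
    simp only [Finset.mem_sdiff, Finset.mem_singleton, mem_cfgSet_x, mem_cfgSet_o,
      mem_cfgSet_z, mem_cfgSet_c]
  · simp
  · simp
  · simp
  · by_cases hc : c = c0
    · subst hc
      simp only [Sum.inr.injEq, Prod.mk.injEq, true_and]
      constructor
      · rintro ⟨⟨p, hp⟩, hn⟩
        by_cases hp0 : p = p0
        · subst hp0; exact hp.symm
        · exfalso
          refine hn ⟨p, ?_⟩
          rw [← hp]
          congr 1
          simp [hp0]
      · rintro rfl
        refine ⟨⟨p0, rfl⟩, ?_⟩
        rintro ⟨p, hp⟩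
        by_cases hp0 : p = p0
        · subst hp0
          simp only [and_self, eq_self_iff_true, if_true] at hp
          obtain ⟨-, hb⟩ := fidx_inj _ _ _ _ hp
          exact (Bool.not_ne_self _) hb
        · rw [if_neg (by simp [hp0])] at hp
          exact hp0 (fidx_inj _ _ _ _ hp).1
    · constructor
      · rintro ⟨⟨p, hp⟩, hn⟩
        refine absurd ⟨p, ?_⟩ hn
        rw [← hp]
        congr 1
        simp [hc]
      · intro h
        obtain ⟨hc', -⟩ : c = c0 ∧ j = fidx p0 (cs c0 p0) := by simpa using h
        exact absurd hc' hc

/-- cs-flip of one cage token. -/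
lemma move_cs {c0 : CageIdx Sig A n} {p0 : Fin 3} (hV : Valid z sp cs)
    (hV' : Valid z sp (fun c p => if c = c0 ∧ p = p0 then !(cs c0 p0) else cs c p)) :
    TSReach (tsGraph Sig A n) (tsK Sig A n) (cfgSet z sp cs)
      (cfgSet z sp (fun c p => if c = c0 ∧ p = p0 then !(cs c0 p0) else cs c p)) :=
  tsreach_single (cfg_indep hV) cfg_card (cfg_indep hV') cfg_card
    diff_cs diff_cs'
    (adj_cage (fidx_flip p0 (cs c0 p0)).1 (fidx_flip p0 (cs c0 p0)).2)

end Aux5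
section Aux6
set_option linter.unusedSectionVars false
variable {Sig : Type} [Fintype Sig] [DecidableEq Sig] {A : Finset (Sig × Sig)} {n : ℕ}
variable {z : Fin 2} {sp : Fin n → Option Sig}

lemma valid_of_agree (S : Finset (CageIdx Sig A n))
    (hfree : ∀ c ∈ S, Free z sp (cageH1v Sig A n c) ∧ Free z sp (cageH2v Sig A n c))
    {cs cs' : CageIdx Sig A n → Fin 3 → Bool} (hagree : ∀ c ∉ S, cs' c = cs c)
    (hV : Valid z sp cs) : Valid z sp cs' := by
  intro c
  by_cases hc : c ∈ S
  · exact ⟨fun _ => (hfree c hc).1, fun _ => (hfree c hc).2⟩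
  · rw [hagree c hc]
    exact hV c

lemma tsreach_csflips (S : Finset (CageIdx Sig A n))
    (hfree : ∀ c ∈ S, Free z sp (cageH1v Sig A n c) ∧ Free z sp (cageH2v Sig A n c))
    (cs cs' : CageIdx Sig A n → Fin 3 → Bool) (hagree : ∀ c ∉ S, cs c = cs' c)
    (hV : Valid z sp cs) :
    TSReach (tsGraph Sig A n) (tsK Sig A n) (cfgSet z sp cs) (cfgSet z sp cs') := by
  have main : ∀ (m : ℕ) (cs : CageIdx Sig A n → Fin 3 → Bool),
      (∀ c ∉ S, cs c = cs' c) → Valid z sp cs →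
      (Finset.univ.filter fun cp : CageIdx Sig A n × Fin 3 =>
        cs cp.1 cp.2 ≠ cs' cp.1 cp.2).card ≤ m →
      TSReach (tsGraph Sig A n) (tsK Sig A n) (cfgSet z sp cs) (cfgSet z sp cs') := by
    intro m
    induction m with
    | zero =>
        intro cs hag hV hcard
        have heq : cs = cs' := by
          funext c p
          by_contra h
          have hmem : (c, p) ∈ (Finset.univ.filter fun cp : CageIdx Sig A n × Fin 3 =>
              cs cp.1 cp.2 ≠ cs' cp.1 cp.2) := by
            simp only [Finset.mem_filter, Finset.mem_univ, true_and]
            exact h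
          have : (Finset.univ.filter fun cp : CageIdx Sig A n × Fin 3 =>
              cs cp.1 cp.2 ≠ cs' cp.1 cp.2) = ∅ := Finset.card_eq_zero.mp (Nat.le_zero.mp hcard)
          rw [this] at hmem
          exact absurd hmem (Finset.notMem_empty _)
        rw [heq]
        exact tsreach_refl (cfg_indep (heq ▸ hV)) cfg_card
    | succ m ih =>
        intro cs hag hV hcard
        by_cases hne : ∃ cp : CageIdx Sig A n × Fin 3, cs cp.1 cp.2 ≠ cs' cp.1 cp.2
        · obtain ⟨⟨c0, p0⟩, hcp⟩ := hne
          have hc0S : c0 ∈ S := by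
            by_contra hc0
            exact hcp (by rw [hag c0 hc0])
          have hag'' : ∀ c ∉ S,
              (fun c p => if c = c0 ∧ p = p0 then !(cs c0 p0) else cs c p) c = cs c := by
            intro c hc
            funext p
            have hcc : ¬ (c = c0) := fun h => hc (h ▸ hc0S)
            show (if c = c0 ∧ p = p0 then !(cs c0 p0) else cs c p) = cs c p
            rw [if_neg (fun hh => hcc hh.1)]
          have hV'' : Valid z sp
              (fun c p => if c = c0 ∧ p = p0 then !(cs c0 p0) else cs c p) :=
            valid_of_agree S hfree hag'' hV
          have hstep := move_cs (c0 := c0) (p0 := p0) hV hV''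
          have hfix : (fun (c : CageIdx Sig A n) (p : Fin 3) =>
              if c = c0 ∧ p = p0 then !(cs c0 p0) else cs c p) c0 p0 = cs' c0 p0 := by
            show (if c0 = c0 ∧ p0 = p0 then !(cs c0 p0) else cs c0 p0) = cs' c0 p0
            rw [if_pos (And.intro rfl rfl)]
            have hbb : ∀ a b : Bool, a ≠ b → (!a) = b := by decide
            exact hbb _ _ hcp
          have hsub : (Finset.univ.filter fun cp : CageIdx Sig A n × Fin 3 =>
              (fun c p => if c = c0 ∧ p = p0 then !(cs c0 p0) else cs c p) cp.1 cp.2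
                ≠ cs' cp.1 cp.2) ⊆
              (Finset.univ.filter fun cp : CageIdx Sig A n × Fin 3 =>
                cs cp.1 cp.2 ≠ cs' cp.1 cp.2).erase (c0, p0) := by
            intro cp hcpmem
            simp only [Finset.mem_filter, Finset.mem_univ, true_and] at hcpmem
            rw [Finset.mem_erase]
            by_cases hcc : cp = (c0, p0)
            · subst hcc
              exact absurd hfix hcpmem
            · refine ⟨hcc, ?_⟩
              simp only [Finset.mem_filter, Finset.mem_univ, true_and]
              intro h
              refine hcpmem ?_
              show (if cp.1 = c0 ∧ cp.2 = p0 then !(cs c0 p0) else cs cp.1 cp.2)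
                = cs' cp.1 cp.2
              rw [if_neg (fun hh => hcc (Prod.ext hh.1 hh.2)), h]
          have hmem0 : (c0, p0) ∈ (Finset.univ.filter fun cp : CageIdx Sig A n × Fin 3 =>
              cs cp.1 cp.2 ≠ cs' cp.1 cp.2) := by
            simp only [Finset.mem_filter, Finset.mem_univ, true_and]
            exact hcp
          have hcard'' : (Finset.univ.filter fun cp : CageIdx Sig A n × Fin 3 =>
              (fun c p => if c = c0 ∧ p = p0 then !(cs c0 p0) else cs c p) cp.1 cp.2
                ≠ cs' cp.1 cp.2).card ≤ m := by
            have h1 := Finset.card_le_card hsub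
            rw [Finset.card_erase_of_mem hmem0] at h1
            omega
          have hag2 : ∀ c ∉ S,
              (fun c p => if c = c0 ∧ p = p0 then !(cs c0 p0) else cs c p) c = cs' c := by
            intro c hc
            rw [hag'' c hc, hag c hc]
          exact tsreach_trans hstep (ih _ hag2 hV'' hcard'')
        · push_neg at hne
          have heq : cs = cs' := funext fun c => funext fun p => hne (c, p)
          rw [heq]
          exact tsreach_refl (cfg_indep (heq ▸ hV)) cfg_card
  exact main _ cs hagree hV le_rfl

end Aux6
section Aux7
set_option linter.unusedSectionVars false
variable {Sig : Type} [Fintype Sig] [DecidableEq Sig] {A : Finset (Sig × Sig)} {n : ℕ}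

/-- Cage-token placement associated with a word. -/
def occ0 (w : Fin n → Sig) : CageIdx Sig A n → Fin 3 → Bool
  | Sum.inl q, _ => decide (w q.1.1.2 = q.1.2.2)
  | Sum.inr _, _ => false

lemma fidx_true : ∀ j : Fin 8, (∃ p, fidx p true = j) ↔ (j = 2 ∨ j = 5 ∨ j = 7) := by decide

lemma fidx_false : ∀ j : Fin 8, (∃ p, fidx p false = j) ↔ (j = 1 ∨ j = 4 ∨ j = 6) := by decide

lemma Iword_eq (w : Fin n → Sig) :
    Iword Sig A n w = cfgSet 0 (fun i => some (w i)) (occ0 w) := by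
  ext a
  rcases a with (⟨i, σ⟩ | (i | t)) | ⟨c, j⟩
  · simp [Iword]
  · simp [Iword]
  · simp only [Iword, Finset.mem_filter, Finset.mem_univ, true_and, mem_cfgSet_z]
    exact eq_comm
  · simp only [Iword, Finset.mem_filter, Finset.mem_univ, true_and, mem_cfgSet_c]
    rcases c with q | i
    · by_cases h : w q.1.1.2 = q.1.2.2
      · rw [if_pos (show cageOcc Sig A n w (Sum.inl q) from h)]
        have hocc : ∀ p : Fin 3, occ0 w (Sum.inl q) p = true := fun p => decide_eq_true h
        have hocc2 : (decide (w q.1.1.2 = q.1.2.2)) = true := decide_eq_true h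
        simp only [occ0, hocc2]
        exact (fidx_true j).symm
      · rw [if_neg (show ¬ cageOcc Sig A n w (Sum.inl q) from h)]
        have hocc2 : (decide (w q.1.1.2 = q.1.2.2)) = false := decide_eq_false h
        simp only [occ0, hocc2]
        exact (fidx_false j).symm
    · rw [if_neg (show ¬ cageOcc Sig A n w (Sum.inr i) from not_false)]
      simp only [occ0]
      exact (fidx_false j).symm

variable {z : Fin 2} {sp : Fin n → Option Sig}

lemma word_h1_free {v : Fin n → Sig} (hv : IsWord Sig A n v)
    (hsp : ∀ i, sp i = some (v i) ∨ sp i = none)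
    (q : {q : (Fin n × Fin n) × Sig × Sig //
      (q.1.2 : ℕ) = (q.1.1 : ℕ) + 1 ∧ (q.2.1, q.2.2) ∉ A})
    (hocc : v q.1.1.2 = q.1.2.2) :
    Free z sp (cageH1v Sig A n (Sum.inl q)) := by
  show sp q.1.1.1 ≠ some q.1.2.1
  rcases hsp q.1.1.1 with h | h
  · rw [h]
    intro hh
    have he : v q.1.1.1 = q.1.2.1 := by injection hh
    have := hv q.1.1.1 q.1.1.2 q.2.1
    rw [he, hocc] at this
    exact q.2.2 this
  · rw [h]
    exact fun hh => nomatch hh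

lemma word_h2_free {v : Fin n → Sig}
    (hsp : ∀ i, sp i = some (v i) ∨ sp i = none)
    (q : {q : (Fin n × Fin n) × Sig × Sig //
      (q.1.2 : ℕ) = (q.1.1 : ℕ) + 1 ∧ (q.2.1, q.2.2) ∉ A})
    (hocc : ¬ v q.1.1.2 = q.1.2.2) :
    Free z sp (cageH2v Sig A n (Sum.inl q)) := by
  show sp q.1.1.2 ≠ some q.1.2.2
  rcases hsp q.1.1.2 with h | h
  · rw [h]
    intro hh
    exact hocc (by injection hh)
  · rw [h]
    exact fun hh => nomatch hh

lemma valid_main {v : Fin n → Sig} (hv : IsWord Sig A n v)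
    {cs : CageIdx Sig A n → Fin 3 → Bool}
    (hsp : ∀ i, sp i = some (v i) ∨ sp i = none)
    (hinl : ∀ q p, cs (Sum.inl q) p = decide (v q.1.1.2 = q.1.2.2))
    (hzt : ∀ i p, cs (Sum.inr i) p = true → Free z sp (cageH1v Sig A n (Sum.inr i)))
    (hzf : ∀ i p, cs (Sum.inr i) p = false → sp i ≠ none) :
    Valid z sp cs := by
  intro c
  rcases c with q | i
  · constructor
    · rintro ⟨p, hp⟩
      rw [hinl] at hp
      exact word_h1_free hv hsp q (of_decide_eq_true hp)
    · rintro ⟨p, hp⟩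
      rw [hinl] at hp
      exact word_h2_free hsp q (of_decide_eq_false hp)
  · constructor
    · rintro ⟨p, hp⟩
      exact hzt i p hp
    · rintro ⟨p, hp⟩
      exact hzf i p hp

end Aux7
section Aux8
set_option linter.unusedSectionVars false
variable {Sig : Type} [Fintype Sig] [DecidableEq Sig] {A : Finset (Sig × Sig)} {n : ℕ}

lemma tsreach_single_pos (w w' : Fin n → Sig) (hw : IsWord Sig A n w) (hw' : IsWord Sig A n w')
    (j0 : Fin n) (hd : ∀ i, i ≠ j0 → w i = w' i) :
    TSReach (tsGraph Sig A n) (tsK Sig A n) (Iword Sig A n w) (Iword Sig A n w') := by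
  rw [Iword_eq, Iword_eq]
  -- abbreviations (all inline):
  -- SPW = fun i => some (w i), SPO = fun i => if i = j0 then none else some (w i)
  -- SPO' = fun i => if i = j0 then none else some (w' i), SPW' = fun i => some (w' i)
  -- CSA = occ0 w, CSB/CSC = z-cage j0 forced true, CSD = occ0 w'
  -- ZZ = if Odd (j0+1) then 1 else 0
  have hzzfree : ∀ sp : Fin n → Option Sig,
      Free (if Odd ((j0 : ℕ) + 1) then (1 : Fin 2) else 0) sp
        (cageH1v Sig A n (Sum.inr j0)) := by
    intro sp
    show (if Odd ((j0 : ℕ) + 1) then (1 : Fin 2) else 0)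
      ≠ (if Odd ((j0 : ℕ) + 1) then (0 : Fin 2) else 1)
    by_cases h : Odd ((j0 : ℕ) + 1) <;> simp [h]
  have hspW : ∀ i, (fun i => some (w i)) i = some (w i) ∨ (fun i => some (w i)) i = none :=
    fun i => Or.inl rfl
  have hspW' : ∀ i, (fun i => some (w' i)) i = some (w' i) ∨ (fun i => some (w' i)) i = none :=
    fun i => Or.inl rfl
  have hspO_w : ∀ i, (fun i => if i = j0 then none else some (w i)) i = some (w i) ∨
      (fun i => if i = j0 then none else some (w i)) i = none := by
    intro i
    by_cases h : i = j0
    · right; simp [h]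
    · left; simp [h]
  have hspO_w' : ∀ i, (fun i => if i = j0 then none else some (w i)) i = some (w' i) ∨
      (fun i => if i = j0 then none else some (w i)) i = none := by
    intro i
    by_cases h : i = j0
    · right; simp [h]
    · left; simp [h, hd i h]
  have hinlA : ∀ q p, occ0 (A := A) w (Sum.inl q) p = decide (w q.1.1.2 = q.1.2.2) :=
    fun q p => rfl
  have hinlD : ∀ q p, occ0 (A := A) w' (Sum.inl q) p = decide (w' q.1.1.2 = q.1.2.2) :=
    fun q p => rfl
  have hinlB : ∀ q p,
      (fun c p => if c = Sum.inr j0 then true else occ0 (A := A) w c p) (Sum.inl q) p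
        = decide (w q.1.1.2 = q.1.2.2) := by
    intro q p
    show (if Sum.inl q = Sum.inr j0 then true else occ0 (A := A) w (Sum.inl q) p) = _
    rw [if_neg (fun h => Sum.inl_ne_inr h)]
    rfl
  have hinlC : ∀ q p,
      (fun c p => if c = Sum.inr j0 then true else occ0 (A := A) w' c p) (Sum.inl q) p
        = decide (w' q.1.1.2 = q.1.2.2) := by
    intro q p
    show (if Sum.inl q = Sum.inr j0 then true else occ0 (A := A) w' (Sum.inl q) p) = _
    rw [if_neg (fun h => Sum.inl_ne_inr h)]
    rfl
  have hztA : ∀ (z : Fin 2) (sp : Fin n → Option Sig) (v : Fin n → Sig) (i : Fin n) (p : Fin 3),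
      occ0 (A := A) v (Sum.inr i) p = true → Free z sp (cageH1v Sig A n (Sum.inr i)) :=
    fun _ _ _ _ _ hp => absurd hp Bool.false_ne_true
  have hztB : ∀ (sp : Fin n → Option Sig) (v : Fin n → Sig) (i : Fin n) (p : Fin 3),
      (fun c p => if c = Sum.inr j0 then true else occ0 (A := A) v c p) (Sum.inr i) p = true →
      Free (if Odd ((j0 : ℕ) + 1) then (1 : Fin 2) else 0) sp
        (cageH1v Sig A n (Sum.inr i)) := by
    intro sp v i p hp
    by_cases h : i = j0
    · subst h
      exact hzzfree sp
    · have hp' : (if (Sum.inr i : CageIdx Sig A n) = Sum.inr j0 then true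
          else occ0 (A := A) v (Sum.inr i) p) = true := hp
      rw [if_neg (fun hh => h (by injection hh))] at hp'
      exact absurd hp' Bool.false_ne_true
  have hzfsome : ∀ (v : Fin n → Sig) (cs : CageIdx Sig A n → Fin 3 → Bool)
      (i : Fin n) (p : Fin 3), cs (Sum.inr i) p = false → (fun i => some (v i)) i ≠ none :=
    fun _ _ _ _ _ hh => Option.some_ne_none _ hh
  have hzfO : ∀ (v : Fin n → Sig) (i : Fin n) (p : Fin 3),
      (fun c p => if c = Sum.inr j0 then true else occ0 (A := A) v c p) (Sum.inr i) p = false →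
      (fun i => if i = j0 then none else some (w i)) i ≠ none := by
    intro v i p hp hh
    by_cases h : i = j0
    · have hp' : (if (Sum.inr i : CageIdx Sig A n) = Sum.inr j0 then true
          else occ0 (A := A) v (Sum.inr i) p) = false := hp
      rw [if_pos (by rw [h])] at hp'
      exact Bool.noConfusion hp'
    · have hh' : (if i = j0 then (none : Option Sig) else some (w i)) = none := hh
      rw [if_neg h] at hh'
      exact Option.some_ne_none _ hh'
  -- the eight validity facts
  have V0 : Valid (0 : Fin 2) (fun i => some (w i)) (occ0 (A := A) w) :=
    valid_main hw hspW hinlA (hztA 0 _ w) (hzfsome w (occ0 (A := A) w))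
  have V1 : Valid (if Odd ((j0 : ℕ) + 1) then (1 : Fin 2) else 0) (fun i => some (w i))
      (occ0 (A := A) w) :=
    valid_main hw hspW hinlA (hztA _ _ w) (hzfsome w (occ0 (A := A) w))
  have V2 : Valid (if Odd ((j0 : ℕ) + 1) then (1 : Fin 2) else 0) (fun i => some (w i))
      (fun c p => if c = Sum.inr j0 then true else occ0 (A := A) w c p) :=
    valid_main hw hspW hinlB (hztB _ w) (hzfsome w (fun c p => if c = Sum.inr j0 then true else occ0 (A := A) w c p))
  have V3 : Valid (if Odd ((j0 : ℕ) + 1) then (1 : Fin 2) else 0)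
      (fun i => if i = j0 then none else some (w i))
      (fun c p => if c = Sum.inr j0 then true else occ0 (A := A) w c p) :=
    valid_main hw hspO_w hinlB (hztB _ w) (hzfO w)
  have V4 : Valid (if Odd ((j0 : ℕ) + 1) then (1 : Fin 2) else 0)
      (fun i => if i = j0 then none else some (w i))
      (fun c p => if c = Sum.inr j0 then true else occ0 (A := A) w' c p) :=
    valid_main hw' hspO_w' hinlC (hztB _ w') (hzfO w')
  have V5 : Valid (if Odd ((j0 : ℕ) + 1) then (1 : Fin 2) else 0) (fun i => some (w' i))
      (fun c p => if c = Sum.inr j0 then true else occ0 (A := A) w' c p) :=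
    valid_main hw' hspW' hinlC (hztB _ w') (hzfsome w' (fun c p => if c = Sum.inr j0 then true else occ0 (A := A) w' c p))
  have V6 : Valid (if Odd ((j0 : ℕ) + 1) then (1 : Fin 2) else 0) (fun i => some (w' i))
      (occ0 (A := A) w') :=
    valid_main hw' hspW' hinlD (hztA _ _ w') (hzfsome w' (occ0 (A := A) w'))
  have V7 : Valid (0 : Fin 2) (fun i => some (w' i)) (occ0 (A := A) w') :=
    valid_main hw' hspW' hinlD (hztA 0 _ w') (hzfsome w' (occ0 (A := A) w'))
  -- frees for the z-cage flip
  have hfree1 : ∀ sp : Fin n → Option Sig, (∀ i, sp i ≠ none) →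
      ∀ c ∈ ({Sum.inr j0} : Finset (CageIdx Sig A n)),
      Free (if Odd ((j0 : ℕ) + 1) then (1 : Fin 2) else 0) sp (cageH1v Sig A n c) ∧ Free (if Odd ((j0 : ℕ) + 1) then (1 : Fin 2) else 0) sp (cageH2v Sig A n c) := by
    intro sp hsp c hc
    rw [Finset.mem_singleton] at hc
    subst hc
    exact ⟨hzzfree sp, hsp j0⟩
  have hagree1 : ∀ (v : Fin n → Sig), ∀ c ∉ ({Sum.inr j0} : Finset (CageIdx Sig A n)),
      occ0 (A := A) v c = (fun c p => if c = Sum.inr j0 then true else occ0 (A := A) v c p) c := by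
    intro v c hc
    funext p
    show occ0 (A := A) v c p = if c = Sum.inr j0 then true else occ0 (A := A) v c p
    rw [if_neg (fun h => hc (by rw [h]; exact Finset.mem_singleton_self _))]
  have hj0ne : ∀ q : {q : (Fin n × Fin n) × Sig × Sig //
      (q.1.2 : ℕ) = (q.1.1 : ℕ) + 1 ∧ (q.2.1, q.2.2) ∉ A}, q.1.1.2 = j0 → q.1.1.1 ≠ j0 := by
    intro q h1 h2
    have hq := q.2.1
    rw [h1, h2] at hq
    omega
  have hfreeMid : ∀ c ∈ (Finset.univ.filter fun c : CageIdx Sig A n =>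
      match c with
      | Sum.inl q => q.1.1.2 = j0 ∧ (q.1.2.2 = w j0 ∨ q.1.2.2 = w' j0)
      | Sum.inr _ => False),
      Free (if Odd ((j0 : ℕ) + 1) then (1 : Fin 2) else 0) (fun i => if i = j0 then none else some (w i)) (cageH1v Sig A n c) ∧ Free (if Odd ((j0 : ℕ) + 1) then (1 : Fin 2) else 0) (fun i => if i = j0 then none else some (w i)) (cageH2v Sig A n c) := by
    intro c hc
    simp only [Finset.mem_filter, Finset.mem_univ, true_and] at hc
    rcases c with q | i
    · obtain ⟨h1, h2⟩ := hc
      constructor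
      · show (fun i => if i = j0 then none else some (w i)) q.1.1.1 ≠ some q.1.2.1
        have hne := hj0ne q h1
        intro heq
        have heq' : (if q.1.1.1 = j0 then (none : Option Sig) else some (w q.1.1.1))
            = some q.1.2.1 := heq
        rw [if_neg hne] at heq'
        have hval : w q.1.1.1 = q.1.2.1 := by injection heq'
        rcases h2 with h2 | h2
        · have hA := hw q.1.1.1 q.1.1.2 q.2.1
          rw [hval, h1, ← h2] at hA
          exact q.2.2 hA
        · have hA := hw' q.1.1.1 q.1.1.2 q.2.1
          rw [← hd q.1.1.1 hne, hval, h1, ← h2] at hA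
          exact q.2.2 hA
      · show (fun i => if i = j0 then none else some (w i)) q.1.1.2 ≠ some q.1.2.2
        intro heq
        have heq' : (if q.1.1.2 = j0 then (none : Option Sig) else some (w q.1.1.2))
            = some q.1.2.2 := heq
        rw [if_pos h1] at heq'
        exact nomatch heq'
    · exact hc.elim
  have hagreeMid : ∀ c ∉ (Finset.univ.filter fun c : CageIdx Sig A n =>
      match c with
      | Sum.inl q => q.1.1.2 = j0 ∧ (q.1.2.2 = w j0 ∨ q.1.2.2 = w' j0)
      | Sum.inr _ => False), (fun c p => if c = Sum.inr j0 then true else occ0 (A := A) w c p) c = (fun c p => if c = Sum.inr j0 then true else occ0 (A := A) w' c p) c := by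
    intro c hc
    simp only [Finset.mem_filter, Finset.mem_univ, true_and] at hc
    funext p
    rcases c with q | i
    · show (if Sum.inl q = Sum.inr j0 then true else occ0 (A := A) w (Sum.inl q) p)
        = (if Sum.inl q = Sum.inr j0 then true else occ0 (A := A) w' (Sum.inl q) p)
      rw [if_neg (fun h => Sum.inl_ne_inr h), if_neg (fun h => Sum.inl_ne_inr h)]
      show decide (w q.1.1.2 = q.1.2.2) = decide (w' q.1.1.2 = q.1.2.2)
      have hc' : ¬ (q.1.1.2 = j0 ∧ (q.1.2.2 = w j0 ∨ q.1.2.2 = w' j0)) := hc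
      by_cases h1 : q.1.1.2 = j0
      · have h2 : ¬ (q.1.2.2 = w j0 ∨ q.1.2.2 = w' j0) := fun h => hc' ⟨h1, h⟩
        push_neg at h2
        rw [decide_eq_false (by rw [h1]; exact fun h => h2.1 h.symm),
          decide_eq_false (by rw [h1]; exact fun h => h2.2 h.symm)]
      · rw [hd q.1.1.2 h1]
    · rfl
  have hspeq : (fun i => if i = j0 then none else some (w i)) = (fun i => if i = j0 then (none : Option Sig) else some (w' i)) := by
    funext i
    by_cases h : i = j0
    · simp [h]
    · simp [h, hd i h]
  have V4' : Valid (if Odd ((j0 : ℕ) + 1) then (1 : Fin 2) else 0) (fun i => if i = j0 then (none : Option Sig) else some (w' i)) (fun c p => if c = Sum.inr j0 then true else occ0 (A := A) w' c p) := hspeq ▸ V4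
  have T1 : TSReach (tsGraph Sig A n) (tsK Sig A n)
      (cfgSet 0 (fun i => some (w i)) (occ0 (A := A) w)) (cfgSet (if Odd ((j0 : ℕ) + 1) then (1 : Fin 2) else 0) (fun i => some (w i)) (occ0 (A := A) w)) := by
    by_cases h : (if Odd ((j0 : ℕ) + 1) then (1 : Fin 2) else 0) = 0
    · rw [h]
      exact tsreach_refl (cfg_indep V0) cfg_card
    · exact move_z (fun hh => h hh.symm) V0 V1
  have T2 : TSReach (tsGraph Sig A n) (tsK Sig A n)
      (cfgSet (if Odd ((j0 : ℕ) + 1) then (1 : Fin 2) else 0) (fun i => some (w i)) (occ0 (A := A) w)) (cfgSet (if Odd ((j0 : ℕ) + 1) then (1 : Fin 2) else 0) (fun i => some (w i)) (fun c p => if c = Sum.inr j0 then true else occ0 (A := A) w c p)) :=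
    tsreach_csflips {Sum.inr j0} (hfree1 _ (fun i hh => Option.some_ne_none _ hh))
      _ _ (hagree1 w) V1
  have T3 : TSReach (tsGraph Sig A n) (tsK Sig A n)
      (cfgSet (if Odd ((j0 : ℕ) + 1) then (1 : Fin 2) else 0) (fun i => some (w i)) (fun c p => if c = Sum.inr j0 then true else occ0 (A := A) w c p)) (cfgSet (if Odd ((j0 : ℕ) + 1) then (1 : Fin 2) else 0) (fun i => if i = j0 then none else some (w i)) (fun c p => if c = Sum.inr j0 then true else occ0 (A := A) w c p)) :=
    move_sp (j := j0) (σ := w j0) rfl V2 V3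
  have T4 : TSReach (tsGraph Sig A n) (tsK Sig A n)
      (cfgSet (if Odd ((j0 : ℕ) + 1) then (1 : Fin 2) else 0) (fun i => if i = j0 then none else some (w i)) (fun c p => if c = Sum.inr j0 then true else occ0 (A := A) w c p)) (cfgSet (if Odd ((j0 : ℕ) + 1) then (1 : Fin 2) else 0) (fun i => if i = j0 then none else some (w i)) (fun c p => if c = Sum.inr j0 then true else occ0 (A := A) w' c p)) :=
    tsreach_csflips _ hfreeMid _ _ hagreeMid V3
  have T5 : TSReach (tsGraph Sig A n) (tsK Sig A n)
      (cfgSet (if Odd ((j0 : ℕ) + 1) then (1 : Fin 2) else 0) (fun i => if i = j0 then (none : Option Sig) else some (w' i)) (fun c p => if c = Sum.inr j0 then true else occ0 (A := A) w' c p)) (cfgSet (if Odd ((j0 : ℕ) + 1) then (1 : Fin 2) else 0) (fun i => some (w' i)) (fun c p => if c = Sum.inr j0 then true else occ0 (A := A) w' c p)) :=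
    move_sp' (j := j0) (σ := w' j0) rfl V5 V4'
  have T5' : TSReach (tsGraph Sig A n) (tsK Sig A n)
      (cfgSet (if Odd ((j0 : ℕ) + 1) then (1 : Fin 2) else 0) (fun i => if i = j0 then none else some (w i)) (fun c p => if c = Sum.inr j0 then true else occ0 (A := A) w' c p)) (cfgSet (if Odd ((j0 : ℕ) + 1) then (1 : Fin 2) else 0) (fun i => some (w' i)) (fun c p => if c = Sum.inr j0 then true else occ0 (A := A) w' c p)) := by
    rw [hspeq]
    exact T5
  have T6 : TSReach (tsGraph Sig A n) (tsK Sig A n)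
      (cfgSet (if Odd ((j0 : ℕ) + 1) then (1 : Fin 2) else 0) (fun i => some (w' i)) (fun c p => if c = Sum.inr j0 then true else occ0 (A := A) w' c p)) (cfgSet (if Odd ((j0 : ℕ) + 1) then (1 : Fin 2) else 0) (fun i => some (w' i)) (occ0 (A := A) w')) :=
    tsreach_csflips {Sum.inr j0} (hfree1 _ (fun i hh => Option.some_ne_none _ hh))
      _ _ (fun c hc => (hagree1 w' c hc).symm) V5
  have T7 : TSReach (tsGraph Sig A n) (tsK Sig A n)
      (cfgSet (if Odd ((j0 : ℕ) + 1) then (1 : Fin 2) else 0) (fun i => some (w' i)) (occ0 (A := A) w')) (cfgSet 0 (fun i => some (w' i)) (occ0 (A := A) w')) := by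
    by_cases h : (if Odd ((j0 : ℕ) + 1) then (1 : Fin 2) else 0) = 0
    · rw [h]
      exact tsreach_refl (cfg_indep V7) cfg_card
    · exact move_z h V6 V7
  exact tsreach_trans T1 (tsreach_trans T2 (tsreach_trans T3 (tsreach_trans T4
    (tsreach_trans T5' (tsreach_trans T6 T7)))))

end Aux8
section Aux9
set_option linter.unusedSectionVars false
variable {Sig : Type} [Fintype Sig] [DecidableEq Sig] {A : Finset (Sig × Sig)} {n : ℕ}

lemma valid_word {v : Fin n → Sig} (hv : IsWord Sig A n v) :
    Valid (0 : Fin 2) (fun i => some (v i)) (occ0 (A := A) v) :=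
  valid_main hv (fun _ => Or.inl rfl) (fun _ _ => rfl)
    (fun _ _ hp => absurd hp Bool.false_ne_true)
    (fun _ _ _ hh => Option.some_ne_none _ hh)

lemma tsreach_iword_refl {v : Fin n → Sig} (hv : IsWord Sig A n v) :
    TSReach (tsGraph Sig A n) (tsK Sig A n) (Iword Sig A n v) (Iword Sig A n v) := by
  rw [Iword_eq]
  exact tsreach_refl (cfg_indep (valid_word hv)) cfg_card

lemma tsreach_eostep (w w' : Fin n → Sig) (hw : IsWord Sig A n w) (hw' : IsWord Sig A n w')
    (hstep : EOStep Sig n w w') :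
    TSReach (tsGraph Sig A n) (tsK Sig A n) (Iword Sig A n w) (Iword Sig A n w') := by
  have main : ∀ (m : ℕ) (w : Fin n → Sig), IsWord Sig A n w → EOStep Sig n w w' →
      (Finset.univ.filter fun i => w i ≠ w' i).card ≤ m →
      TSReach (tsGraph Sig A n) (tsK Sig A n) (Iword Sig A n w) (Iword Sig A n w') := by
    intro m
    induction m with
    | zero =>
        intro w hw hstep hcard
        have heq : w = w' := by
          funext i
          by_contra h
          have hmem : i ∈ (Finset.univ.filter fun i => w i ≠ w' i) := by
            simp only [Finset.mem_filter, Finset.mem_univ, true_and]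
            exact h
          have hemp : (Finset.univ.filter fun i => w i ≠ w' i) = ∅ :=
            Finset.card_eq_zero.mp (Nat.le_zero.mp hcard)
          rw [hemp] at hmem
          exact absurd hmem (Finset.notMem_empty _)
        rw [heq]
        exact tsreach_iword_refl hw'
    | succ m ih =>
        intro w hw hstep hcard
        by_cases hne : ∃ i, w i ≠ w' i
        · obtain ⟨j0, hj0⟩ := hne
          have hagree : ∀ i : Fin n, (i : ℕ) % 2 ≠ (j0 : ℕ) % 2 → w i = w' i := by
            rcases hstep with h | h
            · have hj : ¬ Odd ((j0 : ℕ) + 1) := fun ho => hj0 (h j0 ho)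
              rw [Nat.odd_iff] at hj
              intro i hi
              exact h i (by rw [Nat.odd_iff]; omega)
            · have hj : ¬ Even ((j0 : ℕ) + 1) := fun ho => hj0 (h j0 ho)
              rw [Nat.even_iff] at hj
              intro i hi
              exact h i (by rw [Nat.even_iff]; omega)
          have hw'' : IsWord Sig A n (Function.update w j0 (w' j0)) := by
            intro i i' hii'
            by_cases hi : i = j0
            · subst hi
              have hi' : i' ≠ i := by
                intro h
                rw [h] at hii'
                omega
              rw [Function.update_self, Function.update_of_ne hi']
              rw [hagree i' (by omega)]
              exact hw' i i' hii'
            · by_cases hi' : i' = j0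
              · subst hi'
                rw [Function.update_of_ne hi, Function.update_self]
                rw [hagree i (by omega)]
                exact hw' i i' hii'
              · rw [Function.update_of_ne hi, Function.update_of_ne hi']
                exact hw i i' hii'
          have hagree'' : ∀ i : Fin n, (i : ℕ) % 2 ≠ (j0 : ℕ) % 2 →
              Function.update w j0 (w' j0) i = w' i := by
            intro i hi
            have hij : i ≠ j0 := by
              intro h
              rw [h] at hi
              exact hi rfl
            rw [Function.update_of_ne hij]
            exact hagree i hi
          have hstep'' : EOStep Sig n (Function.update w j0 (w' j0)) w' := by
            by_cases hp : (j0 : ℕ) % 2 = 0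
            · right
              intro i hi
              rw [Nat.even_iff] at hi
              exact hagree'' i (by omega)
            · left
              intro i hi
              rw [Nat.odd_iff] at hi
              exact hagree'' i (by omega)
          have hsub : (Finset.univ.filter fun i => Function.update w j0 (w' j0) i ≠ w' i) ⊆
              (Finset.univ.filter fun i => w i ≠ w' i).erase j0 := by
            intro i hi
            simp only [Finset.mem_filter, Finset.mem_univ, true_and] at hi
            rw [Finset.mem_erase]
            constructor
            · intro h
              subst h
              rw [Function.update_self] at hi
              exact hi rfl
            · simp only [Finset.mem_filter, Finset.mem_univ, true_and]
              intro h
              apply hi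
              by_cases hij : i = j0
              · subst hij
                rw [Function.update_self]
              · rw [Function.update_of_ne hij]
                exact h
          have hmem0 : j0 ∈ (Finset.univ.filter fun i => w i ≠ w' i) := by
            simp only [Finset.mem_filter, Finset.mem_univ, true_and]
            exact hj0
          have hcard'' : (Finset.univ.filter
              fun i => Function.update w j0 (w' j0) i ≠ w' i).card ≤ m := by
            have h1 := Finset.card_le_card hsub
            rw [Finset.card_erase_of_mem hmem0] at h1
            omega
          have hdd : ∀ i, i ≠ j0 → w i = Function.update w j0 (w' j0) i := by
            intro i hij
            rw [Function.update_of_ne hij]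
          have hstep1 := tsreach_single_pos w (Function.update w j0 (w' j0)) hw hw'' j0 hdd
          exact tsreach_trans hstep1 (ih _ hw'' hstep'' hcard'')
        · push_neg at hne
          have heq : w = w' := funext hne
          rw [heq]
          exact tsreach_iword_refl hw'
  exact main _ w hw hstep le_rfl

end Aux9
/-- If `(W = (Σ, A), ws, wt)` is a yes-instance of Even/Odd
Word Reconfiguration, then `I_{ws}` and `I_{wt}` lie in the same connected
component of the token-sliding reconfiguration graph `S_k(G(Σ, A, n))`. -/
theorem stmt18 (Sig : Type) [Fintype Sig] [DecidableEq Sig] (A : Finset (Sig × Sig))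
    (n : ℕ) (hn : Even n) (hn0 : 0 < n)
    (ws wt : Fin n → Sig) (hws : IsWord Sig A n ws) (hwt : IsWord Sig A n wt)
    (hreach : EOReach Sig A n ws wt) :
    TSReach (tsGraph Sig A n) (tsK Sig A n) (Iword Sig A n ws) (Iword Sig A n wt) := by
  obtain ⟨ℓ, wseq, h0, hT, hword, hstep⟩ := hreach
  have main : ∀ i ≤ ℓ, TSReach (tsGraph Sig A n) (tsK Sig A n)
      (Iword Sig A n ws) (Iword Sig A n (wseq i)) := by
    intro i
    induction i with
    | zero =>
        intro _
        rw [h0]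
        exact tsreach_iword_refl hws
    | succ i ih =>
        intro hi
        exact tsreach_trans (ih (by omega))
          (tsreach_eostep _ _ (hword i (by omega)) (hword (i + 1) hi) (hstep i (by omega)))
  have hfin := main ℓ le_rfl
  rw [hT] at hfin
  exact hfin
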